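/- Let q be a prime number, let G be a finite group with Fintype.card G = q, and let k, f be natural numbers with f ≥ 1. For every ε ≥ 0 and every randomized distinguisher D : (Fin k → G) × (Fin f → Fin k → G) → PMF Bool whose advantage between the hybrid distributions H 0 and H f is at least ε, there exists a randomized distinguisher D' : (Fin k → G) × (Fin k → G) → PMF Bool whose advantage between the Naor–Reingold distributions NRcommon and NRindep is at least ε / f. -/
import Mathlib

set_option maxHeartbeats 1000000



/-- Naor–Reingold "common exponent" distribution on `(Fin k → G) × (Fin k → G)`. -/
noncomputable def NRcommon (q : ℕ) [NeZero q] (G : Type*) [Group G] [Fintype G] (k : ℕ) :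
    PMF ((Fin k → G) × (Fin k → G)) :=
  (PMF.uniformOfFintype (Fin k → G)).bind fun u =>
    (PMF.uniformOfFintype (ZMod q)ˣ).bind fun a =>
      PMF.pure (u, fun i => (u i) ^ ((a : ZMod q)).val)

/-- Naor–Reingold "independent exponents" distribution on `(Fin k → G) × (Fin k → G)`. -/
noncomputable def NRindep (q : ℕ) [NeZero q] (G : Type*) [Group G] [Fintype G] (k : ℕ) :
    PMF ((Fin k → G) × (Fin k → G)) :=
  (PMF.uniformOfFintype (Fin k → G)).bind fun u =>
    (PMF.uniformOfFintype (Fin k → (ZMod q)ˣ)).bind fun a =>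
      PMF.pure (u, fun i => (u i) ^ ((a i : ZMod q)).val)

/-- The `j`-th hybrid distribution: block `t` uses a fresh exponent per element when
`t < j` and one fresh exponent per block otherwise. -/
noncomputable def hybridNR (q : ℕ) [NeZero q] (G : Type*) [Group G] [Fintype G]
    (k f j : ℕ) : PMF ((Fin k → G) × (Fin f → Fin k → G)) :=
  (PMF.uniformOfFintype (Fin k → G)).bind fun u =>
    (PMF.uniformOfFintype (Fin f → Fin k → (ZMod q)ˣ)).bind fun e =>
      (PMF.uniformOfFintype (Fin f → (ZMod q)ˣ)).bind fun d =>
        PMF.pure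
          (u, fun t i =>
            if (t : ℕ) < j then (u i) ^ ((e t i : ZMod q)).val
            else (u i) ^ ((d t : ZMod q)).val)

/-- Probability that the randomized distinguisher `D` outputs `true` on a sample of `P`. -/
noncomputable def prTrue {α : Type*} (D : α → PMF Bool) (P : PMF α) : ℝ :=
  ((P.bind D) true).toReal

lemma update_uniform {ι α : Type*} [Fintype ι] [DecidableEq ι] [Fintype α] [Nonempty α]
    (j : ι) :
    ((PMF.uniformOfFintype α).bind fun a => (PMF.uniformOfFintype (ι → α)).bind fun d =>
      PMF.pure (Function.update d j a)) = PMF.uniformOfFintype (ι → α) := by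
  classical
  ext g
  simp only [PMF.bind_apply, PMF.uniformOfFintype_apply, PMF.pure_apply, tsum_fintype]
  have hcond : ∀ (a : α) (d : ι → α),
      (g = Function.update d j a) ↔ (a = g j ∧ d = Function.update g j (d j)) := by
    intro a d
    constructor
    · intro h
      have ha : a = g j := by rw [h, Function.update_self]
      refine ⟨ha, funext fun i => ?_⟩
      by_cases hi : i = j
      · subst hi; simp
      · rw [Function.update_of_ne hi]
        rw [h, Function.update_of_ne hi]
    · rintro ⟨ha, hd⟩
      subst ha
      rw [hd, Function.update_idem, Function.update_eq_self]
  have hfiber : ∑ d : ι → α, (if d = Function.update g j (d j) then (1:ENNReal) else 0)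
      = (Fintype.card α : ENNReal) := by
    have hstep : ∀ d : ι → α, (if d = Function.update g j (d j) then (1:ENNReal) else 0)
        = ∑ x : α, (if d = Function.update g j x then (1:ENNReal) else 0) := by
      intro d
      by_cases h : d = Function.update g j (d j)
      · rw [if_pos h, Finset.sum_eq_single (d j)]
        · rw [if_pos h]
        · intro x _ hx
          rw [if_neg]
          intro hdx
          exact hx (by rw [hdx, Function.update_self])
        · intro hmem; exact absurd (Finset.mem_univ _) hmem
      · rw [if_neg h, eq_comm]
        rw [Finset.sum_eq_zero]
        intro x _
        rw [if_neg]
        intro hdx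
        exact h (by rw [hdx, Function.update_self])
    rw [Finset.sum_congr rfl (fun d _ => hstep d), Finset.sum_comm]
    simp
  have hcne : (Fintype.card α : ENNReal) ≠ 0 := by
    exact_mod_cast Fintype.card_ne_zero
  trans (∑ a : α, if a = g j then ((Fintype.card α : ENNReal))⁻¹ *
      (((Fintype.card (ι → α) : ENNReal))⁻¹ * (Fintype.card α : ENNReal)) else 0)
  · refine Finset.sum_congr rfl (fun a _ => ?_)
    by_cases ha : a = g j
    · rw [if_pos ha, ← Finset.mul_sum]
      congr 1
      congr 1
      rw [← hfiber]
      refine Finset.sum_congr rfl (fun d _ => ?_)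
      by_cases h2 : d = Function.update g j (d j)
      · rw [if_pos ((hcond a d).2 ⟨ha, h2⟩), if_pos h2]
      · rw [if_neg h2, if_neg]
        intro h
        exact h2 ((hcond a d).1 h).2
    · rw [if_neg ha, Finset.sum_eq_zero, mul_zero]
      intro d _
      rw [if_neg, mul_zero]
      intro h
      exact ha ((hcond a d).1 h).1
  · rw [Finset.sum_ite_eq' Finset.univ (g j)]
    rw [if_pos (Finset.mem_univ _)]
    rw [mul_comm ((Fintype.card α : ENNReal))⁻¹, mul_assoc,
      ENNReal.mul_inv_cancel hcne (by simp), mul_one]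

lemma bind_update {ι α β : Type*} [Fintype ι] [DecidableEq ι] [Fintype α] [Nonempty α]
    (j : ι) (X : (ι → α) → PMF β) :
    ((PMF.uniformOfFintype α).bind fun a => (PMF.uniformOfFintype (ι → α)).bind fun d =>
      X (Function.update d j a)) = (PMF.uniformOfFintype (ι → α)).bind X := by
  conv_rhs => rw [← update_uniform j]
  simp only [PMF.bind_bind, PMF.pure_bind]

/-- Concrete-security form of the extended Naor–Reingold lemma: any distinguisher with
advantage `ε` between the extreme hybrids `H 0` and `H f` yields a distinguisher with
advantage `ε / f` between `NRcommon` and `NRindep`. -/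
theorem hybridNR_advantage_reduction (q : ℕ) (hq : q.Prime) [NeZero q]
    (G : Type*) [Group G] [Fintype G] (hcard : Fintype.card G = q)
    (k f : ℕ) (hf : 1 ≤ f) (ε : ℝ) (hε : 0 ≤ ε)
    (D : (Fin k → G) × (Fin f → Fin k → G) → PMF Bool)
    (hD : ε ≤ |prTrue D (hybridNR q G k f 0) - prTrue D (hybridNR q G k f f)|) :
    ∃ D' : (Fin k → G) × (Fin k → G) → PMF Bool,
      ε / f ≤ |prTrue D' (NRcommon q G k) - prTrue D' (NRindep q G k)| := by
  classical
  obtain ⟨j, hjf, hjj⟩ : ∃ j, j < f ∧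
      ε / f ≤ |prTrue D (hybridNR q G k f j) - prTrue D (hybridNR q G k f (j+1))| := by
    by_contra hcon
    push_neg at hcon
    have htel : |prTrue D (hybridNR q G k f 0) - prTrue D (hybridNR q G k f f)| ≤
        ∑ j ∈ Finset.range f,
          |prTrue D (hybridNR q G k f j) - prTrue D (hybridNR q G k f (j+1))| := by
      rw [← Finset.sum_range_sub' (fun j => prTrue D (hybridNR q G k f j)) f]
      exact Finset.abs_sum_le_sum_abs _ _
    have hlt : ∑ j ∈ Finset.range f,
        |prTrue D (hybridNR q G k f j) - prTrue D (hybridNR q G k f (j+1))|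
        < ∑ _j ∈ Finset.range f, ε / f :=
      Finset.sum_lt_sum_of_nonempty ⟨0, Finset.mem_range.2 hf⟩
        (fun i hi => hcon i (Finset.mem_range.1 hi))
    rw [Finset.sum_const, Finset.card_range, nsmul_eq_mul] at hlt
    have hfr : (f:ℝ) ≠ 0 := Nat.cast_ne_zero.2 (Nat.one_le_iff_ne_zero.mp hf)
    have hfe : (f:ℝ) * (ε / f) = ε := by field_simp
    linarith
  set jf : Fin f := ⟨j, hjf⟩ with hjfdef
  refine ⟨fun uv =>
    (PMF.uniformOfFintype (Fin f → Fin k → (ZMod q)ˣ)).bind fun e =>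
      (PMF.uniformOfFintype (Fin f → (ZMod q)ˣ)).bind fun d =>
        D (uv.1, fun t i =>
          if (t:ℕ) < j then (uv.1 i) ^ ((e t i : ZMod q)).val
          else if (t:ℕ) = j then uv.2 i
          else (uv.1 i) ^ ((d t : ZMod q)).val), ?_⟩
  have key1 : (NRcommon q G k).bind (fun uv =>
      (PMF.uniformOfFintype (Fin f → Fin k → (ZMod q)ˣ)).bind fun e =>
        (PMF.uniformOfFintype (Fin f → (ZMod q)ˣ)).bind fun d =>
          D (uv.1, fun t i =>
            if (t:ℕ) < j then (uv.1 i) ^ ((e t i : ZMod q)).val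
            else if (t:ℕ) = j then uv.2 i
            else (uv.1 i) ^ ((d t : ZMod q)).val)) = (hybridNR q G k f j).bind D := by
    simp only [NRcommon, hybridNR, PMF.bind_bind, PMF.pure_bind]
    refine congrArg _ (funext fun u => ?_)
    rw [PMF.bind_comm (PMF.uniformOfFintype (ZMod q)ˣ)]
    refine congrArg _ (funext fun e => ?_)
    have hout : ∀ (a : (ZMod q)ˣ) (d : Fin f → (ZMod q)ˣ),
        (fun (t : Fin f) (i : Fin k) =>
          if (t:ℕ) < j then (u i) ^ ((e t i : ZMod q)).val
          else if (t:ℕ) = j then (u i) ^ ((a : ZMod q)).val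
          else (u i) ^ ((d t : ZMod q)).val)
        = (fun (t : Fin f) (i : Fin k) =>
          if (t:ℕ) < j then (u i) ^ ((e t i : ZMod q)).val
          else (u i) ^ (((Function.update d jf a) t : ZMod q)).val) := by
      intro a d; funext t i
      by_cases ht : (t:ℕ) < j
      · rw [if_pos ht, if_pos ht]
      · by_cases ht2 : (t:ℕ) = j
        · have htj : t = jf := Fin.ext ht2
          subst htj
          rw [if_neg ht, if_neg ht, if_pos ht2, Function.update_self]
        · rw [if_neg ht, if_neg ht, if_neg ht2, Function.update_of_ne]
          intro h
          exact ht2 (by rw [h])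
    simp only [hout]
    exact bind_update jf (fun d : Fin f → (ZMod q)ˣ => D (u, fun t i =>
      if (t:ℕ) < j then (u i) ^ ((e t i : ZMod q)).val
      else (u i) ^ ((d t : ZMod q)).val))
  have key2 : (NRindep q G k).bind (fun uv =>
      (PMF.uniformOfFintype (Fin f → Fin k → (ZMod q)ˣ)).bind fun e =>
        (PMF.uniformOfFintype (Fin f → (ZMod q)ˣ)).bind fun d =>
          D (uv.1, fun t i =>
            if (t:ℕ) < j then (uv.1 i) ^ ((e t i : ZMod q)).val
            else if (t:ℕ) = j then uv.2 i
            else (uv.1 i) ^ ((d t : ZMod q)).val)) = (hybridNR q G k f (j+1)).bind D := by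
    simp only [NRindep, hybridNR, PMF.bind_bind, PMF.pure_bind]
    refine congrArg _ (funext fun u => ?_)
    have hout2 : ∀ (b : Fin k → (ZMod q)ˣ) (e : Fin f → Fin k → (ZMod q)ˣ)
        (d : Fin f → (ZMod q)ˣ),
        (fun (t : Fin f) (i : Fin k) =>
          if (t:ℕ) < j then (u i) ^ ((e t i : ZMod q)).val
          else if (t:ℕ) = j then (u i) ^ ((b i : ZMod q)).val
          else (u i) ^ ((d t : ZMod q)).val)
        = (fun (t : Fin f) (i : Fin k) =>
          if (t:ℕ) < j + 1 then (u i) ^ (((Function.update e jf b) t i : ZMod q)).val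
          else (u i) ^ ((d t : ZMod q)).val) := by
      intro b e d; funext t i
      by_cases ht : (t:ℕ) < j
      · have ht1 : (t:ℕ) < j + 1 := Nat.lt_succ_of_lt ht
        rw [if_pos ht, if_pos ht1, Function.update_of_ne]
        intro h
        rw [h] at ht
        exact lt_irrefl j ht
      · by_cases ht2 : (t:ℕ) = j
        · have htj : t = jf := Fin.ext ht2
          subst htj
          rw [if_neg ht, if_pos ht2, if_pos (by omega), Function.update_self]
        · have ht1 : ¬ ((t:ℕ) < j + 1) := by omega
          rw [if_neg ht, if_neg ht2, if_neg ht1]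
    simp only [hout2]
    exact bind_update jf (fun e' : Fin f → Fin k → (ZMod q)ˣ => (PMF.uniformOfFintype (Fin f → (ZMod q)ˣ)).bind fun d =>
      D (u, fun t i =>
        if (t:ℕ) < j + 1 then (u i) ^ ((e' t i : ZMod q)).val
        else (u i) ^ ((d t : ZMod q)).val))
  have e1 : prTrue (fun uv =>
      (PMF.uniformOfFintype (Fin f → Fin k → (ZMod q)ˣ)).bind fun e =>
        (PMF.uniformOfFintype (Fin f → (ZMod q)ˣ)).bind fun d =>
          D (uv.1, fun t i =>
            if (t:ℕ) < j then (uv.1 i) ^ ((e t i : ZMod q)).val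
            else if (t:ℕ) = j then uv.2 i
            else (uv.1 i) ^ ((d t : ZMod q)).val)) (NRcommon q G k)
      = prTrue D (hybridNR q G k f j) := by
    unfold prTrue
    rw [key1]
  have e2 : prTrue (fun uv =>
      (PMF.uniformOfFintype (Fin f → Fin k → (ZMod q)ˣ)).bind fun e =>
        (PMF.uniformOfFintype (Fin f → (ZMod q)ˣ)).bind fun d =>
          D (uv.1, fun t i =>
            if (t:ℕ) < j then (uv.1 i) ^ ((e t i : ZMod q)).val
            else if (t:ℕ) = j then uv.2 i
            else (uv.1 i) ^ ((d t : ZMod q)).val)) (NRindep q G k)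
      = prTrue D (hybridNR q G k f (j+1)) := by
    unfold prTrue
    rw [key2]
  rw [e1, e2]
  exact hjj
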